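/- Let h : X → [0,1] be Lipschitz continuous on a bounded set X ⊆ ℝ^n with constant L, let S ⊂ ℝ^n be compact, and let τ, ε > 0 be given. Suppose a sequence of iterates x^k ∈ X and scenarios s^k ∈ S satisfies: for all k and all j < k, h(x^k + s^j) ≥ τ (feasibility for previously found scenarios), and τ − h(x^k + s^k) > ε (each new scenario is ε-violating). Then the sequence must be finite; i.e., the adversarial algorithm terminates after finitely many iterations with a solution x* satisfying h(x* + s) ≥ τ − ε for all s ∈ S. -/
import Mathlib


open Pointwise

/-- Convergence of the adversarial (cutting-plane) algorithm: if `h` is Lipschitz on the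
relevant bounded region, there is no infinite sequence of iterates each of which is feasible
for all previously found scenarios while admitting a new `ε`-violating scenario. Hence the
algorithm terminates after finitely many steps with `h(x* + s) ≥ τ - ε` for all `s ∈ S`. -/
theorem adversarial_algorithm_terminates {n : ℕ}
    (X S : Set (EuclideanSpace ℝ (Fin n)))
    (hX : Bornology.IsBounded X) (hS : IsCompact S)
    (h : EuclideanSpace ℝ (Fin n) → ℝ) (L : NNReal)
    (hLip : LipschitzOnWith L h (X + S))
    (hrange : ∀ z ∈ X + S, h z ∈ Set.Icc (0 : ℝ) 1)
    (τ ε : ℝ) (hτ : 0 < τ) (hε : 0 < ε)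
    (x s : ℕ → EuclideanSpace ℝ (Fin n))
    (hx : ∀ k, x k ∈ X) (hs : ∀ k, s k ∈ S)
    (hfeas : ∀ k j, j < k → τ ≤ h (x k + s j))
    (hviol : ∀ k, ε < τ - h (x k + s k)) :
    False := by
  -- Key separation estimate: for j < k, ε < L * dist (x k) (x j)
  have key : ∀ j k, j < k → ε < (L : ℝ) * dist (x k) (x j) := by
    intro j k hjk
    have ha : x k + s j ∈ X + S := Set.add_mem_add (hx k) (hs j)
    have hb : x j + s j ∈ X + S := Set.add_mem_add (hx j) (hs j)
    have hd : dist (h (x k + s j)) (h (x j + s j)) ≤ (L : ℝ) * dist (x k + s j) (x j + s j) :=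
      hLip.dist_le_mul _ ha _ hb
    have hgap : ε < h (x k + s j) - h (x j + s j) := by
      have h1 := hfeas k j hjk
      have h2 := hviol j
      linarith
    have habs : h (x k + s j) - h (x j + s j) ≤ dist (h (x k + s j)) (h (x j + s j)) := by
      rw [Real.dist_eq]; exact le_abs_self _
    have hdd : dist (x k + s j) (x j + s j) = dist (x k) (x j) := dist_add_right _ _ _
    rw [hdd] at hd
    linarith
  -- x lies in the compact closure of X; extract a convergent subsequence
  have hcl : IsCompact (closure X) := hX.isCompact_closure
  obtain ⟨a, _, φ, hφ, htend⟩ :=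
    hcl.tendsto_subseq (x := fun k => x k) (fun k => subset_closure (hx k))
  have hcauchy : CauchySeq (fun k => x (φ k)) := htend.cauchySeq
  have hLpos : (0 : ℝ) < L := by
    by_contra hL
    push_neg at hL
    have := key 0 1 one_pos
    nlinarith [dist_nonneg (x := x 1) (y := x 0)]
  obtain ⟨N, hN⟩ := Metric.cauchySeq_iff.mp hcauchy (ε / L) (by positivity)
  have h1 : dist (x (φ (N + 1))) (x (φ N)) < ε / L :=
    hN (N + 1) (Nat.le_succ N) N le_rfl
  have h2 := key (φ N) (φ (N + 1)) (hφ (Nat.lt_succ_self N))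
  have : (L : ℝ) * dist (x (φ (N + 1))) (x (φ N)) < (L : ℝ) * (ε / L) := by
    exact mul_lt_mul_of_pos_left h1 hLpos
  rw [mul_div_cancel₀ _ (ne_of_gt hLpos)] at this
  linarith
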